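/- Let G be an abelian group, A, B ⊆ G nonempty finite sets, p ∈ ℤ, and K ∈ ℝ with K ≥ 1. If |A + B| ≤ K·|A|^{1/2}·|B|^{1/2}, then |p·A + B| ≤ K^{2|p|+3}·|A|^{1/2}·|B|^{1/2}. -/
import Mathlib


open Pointwise

private lemma dilate_aux_nnrat_to_real {x y z : ℕ} {n : ℕ} (hy : 0 < y)
    (h : (x : ℚ≥0) ≤ ((z : ℚ≥0) / (y : ℚ≥0)) ^ (n + 1) * (y : ℚ≥0)) :
    (x : ℝ) * (y : ℝ) ^ n ≤ (z : ℝ) ^ (n + 1) := by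
  have hy' : (0 : ℚ≥0) < (y : ℚ≥0) := by exact_mod_cast hy
  rw [div_pow, div_mul_eq_mul_div, le_div_iff₀ (by positivity)] at h
  have h2 : ((x : ℚ≥0) * (y : ℚ≥0) ^ n) * (y : ℚ≥0) ≤ ((z : ℚ≥0) ^ (n + 1)) * (y : ℚ≥0) := by
    rw [mul_assoc, ← pow_succ]
    exact h
  have h' : (x : ℚ≥0) * (y : ℚ≥0) ^ n ≤ (z : ℚ≥0) ^ (n + 1) :=
    le_of_mul_le_mul_right h2 hy'
  have hx : x * y ^ n ≤ z ^ (n + 1) := by exact_mod_cast h'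
  exact_mod_cast hx

/-- Strengthened dilation lemma for `q = 1`: if `|A + B| ≤ K |A|^{1/2} |B|^{1/2}`
then `|p·A + B| ≤ K^{2|p|+3} |A|^{1/2} |B|^{1/2}`, where `p·A = {pa : a ∈ A}`. -/
theorem dilate_sumset_bound_q_one {G : Type*} [AddCommGroup G] [DecidableEq G]
    (A B : Finset G) (hA : A.Nonempty) (hB : B.Nonempty)
    (p : ℤ) (K : ℝ) (hK : 1 ≤ K)
    (h : ((A + B).card : ℝ) ≤
      K * (A.card : ℝ) ^ ((1 : ℝ) / 2) * (B.card : ℝ) ^ ((1 : ℝ) / 2)) :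
    ((p • A + B).card : ℝ) ≤
      K ^ (2 * |p| + 3) *
        (A.card : ℝ) ^ ((1 : ℝ) / 2) * (B.card : ℝ) ^ ((1 : ℝ) / 2) := by
  set a : ℝ := (A.card : ℝ) ^ ((1 : ℝ) / 2) with ha_def
  set b : ℝ := (B.card : ℝ) ^ ((1 : ℝ) / 2) with hb_def
  have hαpos : (0 : ℝ) < (A.card : ℝ) := by exact_mod_cast hA.card_pos
  have hβpos : (0 : ℝ) < (B.card : ℝ) := by exact_mod_cast hB.card_pos
  have ha_pos : 0 < a := Real.rpow_pos_of_pos hαpos _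
  have hb_pos : 0 < b := Real.rpow_pos_of_pos hβpos _
  have ha2 : a ^ 2 = (A.card : ℝ) := by
    rw [ha_def, ← Real.rpow_natCast ((A.card : ℝ) ^ ((1:ℝ)/2)) 2,
      ← Real.rpow_mul hαpos.le]
    norm_num
  have hb2 : b ^ 2 = (B.card : ℝ) := by
    rw [hb_def, ← Real.rpow_natCast ((B.card : ℝ) ^ ((1:ℝ)/2)) 2,
      ← Real.rpow_mul hβpos.le]
    norm_num
  have hKpos : 0 < K := lt_of_lt_of_le one_pos hK
  set c : ℝ := ((A + B).card : ℝ) with hc_def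
  have hab : c ≤ K * a * b := h
  have hαc : (A.card : ℝ) ≤ c := by
    rw [hc_def]
    exact Nat.cast_le.mpr (Finset.card_le_card_add_right hB)
  have hβc : (B.card : ℝ) ≤ c := by
    rw [hc_def]
    exact Nat.cast_le.mpr (Finset.card_le_card_add_left hA)
  have hcpos : 0 < c := lt_of_lt_of_le hαpos hαc
  have haKb : a ≤ K * b := by
    have h1 : a * a ≤ (K * b) * a := by
      calc a * a = (A.card : ℝ) := by rw [← ha2]; ring
        _ ≤ c := hαc
        _ ≤ K * a * b := hab
        _ = (K * b) * a := by ring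
    exact le_of_mul_le_mul_right h1 ha_pos
  rcases eq_or_ne p 0 with rfl | hp
  · -- p = 0
    rw [zero_zsmul, zero_add]
    have hexp : K ^ (2 * |(0 : ℤ)| + 3) = K ^ (3 : ℕ) := by
      rw [show 2 * |(0 : ℤ)| + 3 = ((3 : ℕ) : ℤ) by norm_num, zpow_natCast]
    rw [hexp]
    have hbb : (B.card : ℝ) = b * b := by rw [← hb2]; ring
    rw [hbb]
    have hbKa : b ≤ K * a := by
      have h1 : b * b ≤ (K * a) * b := by
        calc b * b = (B.card : ℝ) := by rw [← hb2]; ring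
          _ ≤ c := hβc
          _ ≤ K * a * b := hab
          _ = (K * a) * b := by ring
      exact le_of_mul_le_mul_right h1 hb_pos
    have hKab : K * a * b ≤ K ^ 3 * a * b := by
      have hKK : K ≤ K ^ 3 := by
        have h13 : K ^ 1 ≤ K ^ 3 := pow_le_pow_right₀ hK (by norm_num)
        simpa using h13
      have h2 : 0 < a * b := mul_pos ha_pos hb_pos
      nlinarith
    calc b * b ≤ (K * a) * b := by nlinarith
      _ = K * a * b := by ring
      _ ≤ K ^ 3 * a * b := hKab
  · -- p ≠ 0
    obtain ⟨n, hn⟩ : ∃ n : ℕ, p.natAbs = n := ⟨_, rfl⟩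
    have hn1 : 1 ≤ n := by
      have : p.natAbs ≠ 0 := Int.natAbs_ne_zero.2 hp
      omega
    -- p • A + A equals an (m' • A - k • A) with m' + k = n + 1
    obtain ⟨m', k, hmk, hEq⟩ :
        ∃ m' k : ℕ, m' + k = n + 1 ∧ p • A + A = m' • A - k • A := by
      rcases lt_or_gt_of_ne hp with hneg | hpos
      · refine ⟨1, n, by omega, ?_⟩
        have hpn : p = -(n : ℤ) := by omega
        rw [hpn, neg_zsmul, natCast_zsmul, one_nsmul, sub_eq_add_neg, add_comm]
      · refine ⟨n + 1, 0, by omega, ?_⟩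
        have hpn : p = (n : ℤ) := by omega
        rw [hpn, natCast_zsmul, zero_nsmul, sub_zero, succ_nsmul, add_comm]
    -- Plünnecke–Ruzsa bound on P = |p•A + A|
    set P : ℝ := ((p • A + A).card : ℝ) with hP_def
    have hPR := Finset.pluennecke_ruzsa_inequality_nsmul_sub_nsmul_add hB A m' k
    rw [hmk, ← hEq, add_comm B A] at hPR
    have hP : P * (B.card : ℝ) ^ n ≤ c ^ (n + 1) := by
      rw [hP_def, hc_def]
      exact dilate_aux_nnrat_to_real hB.card_pos hPR
    -- Ruzsa triangle: T * |A| ≤ P * c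
    set T : ℝ := ((p • A + B).card : ℝ) with hT_def
    have htri : T * (A.card : ℝ) ≤ P * c := by
      rw [hT_def, hP_def, hc_def]
      exact_mod_cast Finset.ruzsa_triangle_inequality_add_add_add (p • A) A B
    -- combine
    have key : T * (a ^ 2 * b ^ (2 * n)) ≤ (K * a * b) ^ (n + 2) := by
      have hb2n : b ^ (2 * n) = (B.card : ℝ) ^ n := by
        rw [pow_mul, hb2]
      calc T * (a ^ 2 * b ^ (2 * n))
          = (T * (A.card : ℝ)) * (B.card : ℝ) ^ n := by
            rw [hb2n, ha2]; ring
        _ ≤ (P * c) * (B.card : ℝ) ^ n := by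
            apply mul_le_mul_of_nonneg_right htri (by positivity)
        _ = (P * (B.card : ℝ) ^ n) * c := by ring
        _ ≤ c ^ (n + 1) * c := mul_le_mul_of_nonneg_right hP hcpos.le
        _ = c ^ (n + 2) := by rw [← pow_succ]
        _ ≤ (K * a * b) ^ (n + 2) := by
            apply pow_le_pow_left₀ hcpos.le hab
    -- final algebra
    obtain ⟨m, rfl⟩ : ∃ m : ℕ, n = m + 1 := ⟨n - 1, by omega⟩
    have hfin : (K * a * b) ^ (m + 1 + 2) ≤
        K ^ (2 * (m + 1) + 3) * (a * b) * (a ^ 2 * b ^ (2 * (m + 1))) := by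
      have ham : a ^ m ≤ K ^ m * b ^ m := by
        calc a ^ m ≤ (K * b) ^ m := pow_le_pow_left₀ ha_pos.le haKb m
          _ = K ^ m * b ^ m := mul_pow K b m
      calc (K * a * b) ^ (m + 1 + 2)
          = K ^ (m + 3) * (a ^ m * a ^ 3) * b ^ (m + 3) := by
            rw [mul_pow, mul_pow, ← pow_add a m 3]
        _ ≤ K ^ (m + 3) * ((K ^ m * b ^ m) * a ^ 3) * b ^ (m + 3) := by
            apply mul_le_mul_of_nonneg_right _ (by positivity)
            apply mul_le_mul_of_nonneg_left _ (by positivity)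
            exact mul_le_mul_of_nonneg_right ham (by positivity)
        _ = K ^ (2 * m + 3) * a ^ 3 * b ^ (2 * m + 3) := by
            ring
        _ ≤ (K ^ (2 * m + 3) * K ^ 2) * a ^ 3 * b ^ (2 * m + 3) := by
            apply mul_le_mul_of_nonneg_right _ (by positivity)
            apply mul_le_mul_of_nonneg_right _ (by positivity)
            nth_rewrite 1 [← mul_one (K ^ (2 * m + 3))]
            exact mul_le_mul_of_nonneg_left (one_le_pow₀ hK) (by positivity)
        _ = K ^ (2 * (m + 1) + 3) * (a * b) * (a ^ 2 * b ^ (2 * (m + 1))) := by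
            ring
    have hmain : T * (a ^ 2 * b ^ (2 * (m + 1))) ≤
        (K ^ (2 * (m + 1) + 3) * (a * b)) * (a ^ 2 * b ^ (2 * (m + 1))) := by
      calc T * (a ^ 2 * b ^ (2 * (m + 1))) ≤ (K * a * b) ^ (m + 1 + 2) := key
        _ ≤ K ^ (2 * (m + 1) + 3) * (a * b) * (a ^ 2 * b ^ (2 * (m + 1))) := hfin
        _ = (K ^ (2 * (m + 1) + 3) * (a * b)) * (a ^ 2 * b ^ (2 * (m + 1))) := by ring
    have hTle : T ≤ K ^ (2 * (m + 1) + 3) * (a * b) :=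
      le_of_mul_le_mul_right hmain (by positivity)
    have hexp : K ^ (2 * |p| + 3) = K ^ (2 * (m + 1) + 3 : ℕ) := by
      rw [Int.abs_eq_natAbs, hn]
      rw [show (2 : ℤ) * ((m + 1 : ℕ) : ℤ) + 3 = ((2 * (m + 1) + 3 : ℕ) : ℤ) by
        push_cast; ring]
      exact zpow_natCast K (2 * (m + 1) + 3)
    rw [hexp]
    calc T ≤ K ^ (2 * (m + 1) + 3) * (a * b) := hTle
      _ = K ^ (2 * (m + 1) + 3) * a * b := by ring
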